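/- Let p be a prime with p ≡ 3 (mod 4). Then in ℤ[i][X] the polynomial g_p(x) = ∏_{1 ≤ m,n ≤ p−1, p ∤ m²+n²} (x − (m + ni)) satisfies g_p(x) ≡ 1 + x^{2(p−1)} + x^{4(p−1)} + ⋯ + x^{(p−1)²} = ∑_{k=0}^{(p−1)/2} x^{2k(p−1)} (mod p). (When p ≡ 3 (mod 4), the condition p ∤ m²+n² holds automatically for all 1 ≤ m,n ≤ p−1.) -/
import Mathlib


open Polynomial Finset

lemma stmt12_prod_univ_X_sub_C (K : Type*) [Field K] [Fintype K] :
    ∏ x : K, (X - C x : K[X]) = X ^ Fintype.card K - X := by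
  classical
  have hm : (X ^ Fintype.card K - X : K[X]).Monic :=
    monic_X_pow_sub (by simpa using (Nat.one_lt_cast.2 Fintype.one_lt_card : (1:WithBot ℕ) < Fintype.card K))
  have hr := FiniteField.roots_X_pow_card_sub_X K
  have hcard : Multiset.card (X ^ Fintype.card K - X : K[X]).roots
      = (X ^ Fintype.card K - X : K[X]).natDegree := by
    rw [hr, FiniteField.X_pow_card_sub_X_natDegree_eq K Fintype.one_lt_card]
    simp [Finset.card_univ]
  have := prod_multiset_X_sub_C_of_monic_of_roots_card_eq hm hcard
  rw [hr] at this
  rw [Finset.prod_eq_multiset_prod]; exact this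

-- product over nonzero elements
lemma stmt12_prod_nonzero_X_sub_C (K : Type*) [Field K] [Fintype K] [DecidableEq K] :
    ∏ x ∈ Finset.univ.erase (0 : K), (X - C x : K[X]) = X ^ (Fintype.card K - 1) - 1 := by
  have h0 : ((X : K[X]) - C 0) * ∏ x ∈ Finset.univ.erase (0 : K), (X - C x : K[X])
      = X ^ Fintype.card K - X := by
    rw [Finset.mul_prod_erase Finset.univ (fun x => (X - C x : K[X])) (Finset.mem_univ (0:K)), stmt12_prod_univ_X_sub_C]
  have hX : ((X : K[X]) - C 0) = X := by simp
  rw [hX] at h0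
  have hc : (X : K[X]) * (X ^ (Fintype.card K - 1) - 1) = X ^ Fintype.card K - X := by
    have h1 : Fintype.card K - 1 + 1 = Fintype.card K :=
      Nat.succ_pred_eq_of_pos Fintype.card_pos
    rw [mul_sub, mul_one, ← pow_succ', h1]
  exact mul_left_cancel₀ (X_ne_zero) (by rw [h0, hc])

section
variable (p : ℕ) [hp : Fact p.Prime] (K : Type*) [Field K] [CharP K p] (I : K)

omit [CharP K p] in
lemma stmt12_Ipow (hp3 : p % 4 = 3) (hI : I ^ 2 = -1) : I ^ (p - 1) = -1 := by
  have h2 : p - 1 = 2 * ((p - 1) / 2) := by have := hp.out.two_le; omega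
  have hodd : Odd ((p - 1) / 2) := by rw [Nat.odd_iff]; omega
  rw [h2, pow_mul, hI, hodd.neg_one_pow]

lemma stmt12_phi_inj (hp3 : p % 4 = 3) (hI : I ^ 2 = -1) :
    Function.Injective (fun ab : ZMod p × ZMod p =>
      (ZMod.castHom (dvd_refl p) K ab.1) + (ZMod.castHom (dvd_refl p) K ab.2) * I) := by
  set g := ZMod.castHom (dvd_refl p) K with hg
  have hginj : Function.Injective g := g.injective
  rintro ⟨a1, b1⟩ ⟨a2, b2⟩ h
  simp only at h
  by_cases hb : b1 = b2
  · subst hb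
    have h2 : g a1 = g a2 := by
      have := add_right_cancel h; exact this
    exact Prod.ext (hginj h2) rfl
  · exfalso
    have hb2 : b1 - b2 ≠ 0 := sub_ne_zero.2 hb
    have hgb : g (b1 - b2) ≠ 0 := fun hc => hb2 (hginj (by rw [hc, map_zero]))
    have hIeq : I = g ((a2 - a1) / (b1 - b2)) := by
      rw [map_div₀, map_sub, map_sub, eq_div_iff (by rw [← map_sub]; exact hgb)]
      linear_combination h
    have : IsSquare (-1 : ZMod p) := by
      refine ⟨(a2 - a1) / (b1 - b2), ?_⟩
      have h2 : g (-1 : ZMod p) = g (((a2 - a1) / (b1 - b2)) * ((a2 - a1) / (b1 - b2))) := by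
        rw [map_mul, ← hIeq, map_neg, map_one, ← hI]; ring
      exact hginj h2
    rw [ZMod.exists_sq_eq_neg_one_iff] at this
    exact this hp3
end

section
variable (p : ℕ) [hp : Fact p.Prime] (K : Type*) [Field K] [CharP K p] (I : K)

lemma stmt12_prod_g_nonzero :
    ∏ b ∈ Finset.univ.erase (0 : ZMod p),
      (X - C (ZMod.castHom (dvd_refl p) K b) : K[X]) = X ^ (p - 1) - 1 := by
  have h := congrArg (Polynomial.map (ZMod.castHom (dvd_refl p) K))
    (stmt12_prod_nonzero_X_sub_C (ZMod p))
  rw [Polynomial.map_sub, Polynomial.map_pow, Polynomial.map_X, Polynomial.map_one,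
    ZMod.card] at h
  rw [← h, Polynomial.map_prod]
  refine Finset.prod_congr rfl fun b _ => ?_
  rw [Polynomial.map_sub, Polynomial.map_X, Polynomial.map_C]

lemma stmt12_prod_gI (hp3 : p % 4 = 3) (hI : I ^ 2 = -1) :
    ∏ b ∈ Finset.univ.erase (0 : ZMod p),
      (X - C (ZMod.castHom (dvd_refl p) K b * I) : K[X]) = X ^ (p - 1) + 1 := by
  classical
  set g := ZMod.castHom (dvd_refl p) K with hg
  have hI0 : I ≠ 0 := by
    intro h0; rw [h0] at hI; simp at hI
  set σ : K[X] →ₐ[K] K[X] := Polynomial.aeval (C I * X) with hσ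
  have h1 := congrArg σ (stmt12_prod_g_nonzero p K)
  rw [map_sub, map_pow, map_one] at h1
  have hσX : σ X = C I * X := by simp [hσ]
  rw [map_prod] at h1
  have hfac : ∀ b : ZMod p, σ (X - C (g b)) = C I * (X - C (g b * (-I))) := by
    intro b
    rw [map_sub, hσX]
    have : σ (C (g b)) = C (g b) := by simp [hσ]
    rw [this, mul_sub, ← C_mul]
    congr 2
    linear_combination (g b) * hI
  rw [Finset.prod_congr rfl (fun b _ => hfac b), Finset.prod_mul_distrib,
    Finset.prod_const] at h1
  have hcardE : (Finset.univ.erase (0 : ZMod p)).card = p - 1 := by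
    rw [Finset.card_erase_of_mem (Finset.mem_univ _), Finset.card_univ, ZMod.card]
  have hreidx : ∏ b ∈ Finset.univ.erase (0 : ZMod p), (X - C (g b * (-I)) : K[X])
      = ∏ b ∈ Finset.univ.erase (0 : ZMod p), (X - C (g b * I) : K[X]) := by
    refine Finset.prod_bij' (fun b _ => -b) (fun b _ => -b) ?_ ?_ ?_ ?_ ?_
    · intro b hb; simp only [Finset.mem_erase, Finset.mem_univ, and_true] at hb ⊢
      simpa using hb
    · intro b hb; simp only [Finset.mem_erase, Finset.mem_univ, and_true] at hb ⊢
      simpa using hb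
    · intro b _; simp
    · intro b _; simp
    · intro b _; rw [map_neg]; ring_nf
  rw [hcardE, hreidx] at h1
  have hCI : (C I : K[X]) ^ (p - 1) = -1 := by
    rw [← C_pow, stmt12_Ipow p K I hp3 hI]; simp
  rw [hCI, hσX, mul_pow, hCI] at h1
  linear_combination -h1
end

section
variable (p : ℕ) [hp : Fact p.Prime] (K : Type*) [Field K] [CharP K p] (I : K)

lemma stmt12_nat_exp (hp3 : p % 4 = 3) : 2 * (p - 1) * ((p - 1) / 2 + 1) = p * p - 1 := by
  obtain ⟨t, rfl⟩ : ∃ t, p = 4 * t + 3 := ⟨p / 4, by omega⟩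
  have h1 : 4 * t + 3 - 1 = 4 * t + 2 := by omega
  have h2 : (4 * t + 2) / 2 = 2 * t + 1 := by omega
  rw [h1, h2]
  have h3 : (4 * t + 3) * (4 * t + 3) = 2 * (4 * t + 2) * (2 * t + 1 + 1) + 1 := by ring
  rw [h3]; simp

lemma stmt12_prod_g_univ :
    ∏ a : ZMod p, (X - C (ZMod.castHom (dvd_refl p) K a) : K[X]) = X ^ p - X := by
  have h := congrArg (Polynomial.map (ZMod.castHom (dvd_refl p) K))
    (stmt12_prod_univ_X_sub_C (ZMod p))
  rw [Polynomial.map_sub, Polynomial.map_pow, Polynomial.map_X, ZMod.card] at h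
  rw [← h, Polynomial.map_prod]
  refine Finset.prod_congr rfl fun b _ => ?_
  rw [Polynomial.map_sub, Polynomial.map_X, Polynomial.map_C]

lemma stmt12_key [Fintype K] (hp3 : p % 4 = 3) (hI : I ^ 2 = -1)
    (hcard : Fintype.card K = p * p) :
    ∏ ab ∈ (Finset.univ.erase (0 : ZMod p)) ×ˢ (Finset.univ.erase (0 : ZMod p)),
      (X - C (ZMod.castHom (dvd_refl p) K ab.1 + ZMod.castHom (dvd_refl p) K ab.2 * I) : K[X])
    = ∑ k ∈ Finset.range ((p - 1) / 2 + 1), (X : K[X]) ^ (2 * k * (p - 1)) := by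
  classical
  set g := ZMod.castHom (dvd_refl p) K with hg
  set G : K[X] := ∏ ab ∈ (Finset.univ.erase (0 : ZMod p)) ×ˢ (Finset.univ.erase (0 : ZMod p)),
      (X - C (g ab.1 + g ab.2 * I)) with hG
  set H : K[X] := ∑ k ∈ Finset.range ((p - 1) / 2 + 1), (X : K[X]) ^ (2 * k * (p - 1)) with hH
  have hbij : Function.Bijective (fun ab : ZMod p × ZMod p => g ab.1 + g ab.2 * I) := by
    rw [Fintype.bijective_iff_injective_and_card]
    exact ⟨stmt12_phi_inj p K I hp3 hI, by simp [hcard, ZMod.card]⟩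
  -- full product
  have hfull : ∏ ab : ZMod p × ZMod p, (X - C (g ab.1 + g ab.2 * I) : K[X])
      = X ^ (p * p) - X := by
    rw [Fintype.prod_bijective _ hbij _ (fun x : K => (X - C x : K[X])) (fun ab => rfl),
      stmt12_prod_univ_X_sub_C K, hcard]
  -- split
  have hsplit : ∏ ab : ZMod p × ZMod p, (X - C (g ab.1 + g ab.2 * I) : K[X])
      = (X ^ p - X) * ((X ^ (p - 1) + 1) * G) := by
    have h1 : ∏ ab : ZMod p × ZMod p, (X - C (g ab.1 + g ab.2 * I) : K[X])
        = ∏ b : ZMod p, ∏ a : ZMod p, (X - C (g a + g b * I) : K[X]) := by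
      rw [← Finset.prod_product_right']
      rfl
    rw [h1, ← Finset.mul_prod_erase Finset.univ _ (Finset.mem_univ (0 : ZMod p))]
    have h2 : ∏ a : ZMod p, (X - C (g a + g 0 * I) : K[X]) = X ^ p - X := by
      rw [← stmt12_prod_g_univ p K]
      exact Finset.prod_congr rfl fun a _ => by rw [map_zero, zero_mul, add_zero]
    have h3 : ∀ b ∈ Finset.univ.erase (0 : ZMod p),
        ∏ a : ZMod p, (X - C (g a + g b * I) : K[X])
        = (X - C (g b * I)) * ∏ a ∈ Finset.univ.erase (0 : ZMod p),
            (X - C (g a + g b * I) : K[X]) := by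
      intro b _
      rw [← Finset.mul_prod_erase Finset.univ _ (Finset.mem_univ (0 : ZMod p)), map_zero,
        zero_add]
    rw [Finset.prod_congr rfl h3, Finset.prod_mul_distrib, stmt12_prod_gI p K I hp3 hI, h2]
    congr 2
    rw [hG]
    exact (Finset.prod_product_right' _ _ (fun a b => (X - C (g a + g b * I) : K[X]))).symm
  -- RHS identity
  have hrhs : (X ^ p - X : K[X]) * ((X ^ (p - 1) + 1) * H) = X ^ (p * p) - X := by
    have hp1 : p - 1 + 1 = p := Nat.succ_pred_eq_of_pos hp.out.pos
    have hXp : (X ^ p - X : K[X]) = X * (X ^ (p - 1) - 1) := by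
      rw [mul_sub, mul_one, ← pow_succ', hp1]
    have hgeom : H * ((X : K[X]) ^ (2 * (p - 1)) - 1) = X ^ (p * p - 1) - 1 := by
      have := geom_sum_mul ((X : K[X]) ^ (2 * (p - 1))) ((p - 1) / 2 + 1)
      rw [← pow_mul, stmt12_nat_exp p hp3] at this
      rw [← this, hH]
      congr 1
      exact Finset.sum_congr rfl fun k _ => by rw [← pow_mul]; ring_nf
    have hdiff : ((X : K[X]) ^ (p - 1) - 1) * (X ^ (p - 1) + 1) = X ^ (2 * (p - 1)) - 1 := by
      rw [two_mul, pow_add]; ring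
    calc (X ^ p - X : K[X]) * ((X ^ (p - 1) + 1) * H)
        = X * (H * (((X : K[X]) ^ (p - 1) - 1) * (X ^ (p - 1) + 1))) := by rw [hXp]; ring
      _ = X * (X ^ (p * p - 1) - 1) := by rw [hdiff, hgeom]
      _ = X ^ (p * p) - X := by
          rw [mul_sub, mul_one, ← pow_succ',
            Nat.sub_add_cancel (Nat.one_le_iff_ne_zero.2 (Nat.mul_ne_zero hp.out.pos.ne' hp.out.pos.ne'))]
  -- cancel
  have hne1 : (X ^ p - X : K[X]) ≠ 0 := FiniteField.X_pow_card_sub_X_ne_zero K hp.out.one_lt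
  have hne2 : (X ^ (p - 1) + 1 : K[X]) ≠ 0 := by
    intro h
    have := congrArg (Polynomial.eval 0) h
    have hp1 : p - 1 ≠ 0 := by have := hp.out.two_le; omega
    simp [zero_pow hp1] at this
  have := hsplit.symm.trans (hfull.trans hrhs.symm)
  exact mul_left_cancel₀ hne2 (mul_left_cancel₀ hne1 this)
end

attribute [local instance] Ideal.Quotient.field

theorem stmt_12 (p : ℕ) (hp : p.Prime) (hp3 : p % 4 = 3) :
    (p : GaussianInt[X]) ∣
      (∏ mn ∈ (Finset.Icc (1 : ℤ) ((p : ℤ) - 1) ×ˢ Finset.Icc (1 : ℤ) ((p : ℤ) - 1)).filter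
          (fun mn => ¬ (p : ℤ) ∣ (mn.1 ^ 2 + mn.2 ^ 2)),
        (X - C (⟨mn.1, mn.2⟩ : GaussianInt)))
      - ∑ k ∈ Finset.range ((p - 1) / 2 + 1), X ^ (2 * k * (p - 1)) := by
  classical
  haveI : Fact p.Prime := ⟨hp⟩
  have hprime : Prime ((p : ℕ) : GaussianInt) :=
    GaussianInt.prime_of_nat_prime_of_mod_four_eq_three p hp3
  set Idl : Ideal GaussianInt := Ideal.span {((p : ℕ) : GaussianInt)} with hIdl
  haveI hmax : Idl.IsMaximal := PrincipalIdealRing.isMaximal_of_irreducible hprime.irreducible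
  set K := GaussianInt ⧸ Idl with hK
  set mk : GaussianInt →+* K := Ideal.Quotient.mk Idl with hmk
  have hmk0 : ∀ z : GaussianInt, mk z = 0 ↔ ((p : ℕ) : GaussianInt) ∣ z := fun z =>
    Ideal.Quotient.eq_zero_iff_dvd _ z
  -- characteristic p
  have hpK : ((p : ℕ) : K) = 0 := by
    rw [← map_natCast mk p]; exact (hmk0 _).2 dvd_rfl
  haveI : CharP K p := by
    rcases (hp.eq_one_or_self_of_dvd _ (ringChar.dvd hpK)) with h1 | h1
    · exact absurd h1 (CharP.ringChar_ne_one)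
    · exact ringChar.of_eq h1
  -- the imaginary unit
  set I : K := mk ⟨0, 1⟩ with hIdef
  have hsq : (⟨0, 1⟩ : GaussianInt) ^ 2 = -1 := by
    ext <;> simp [sq, Zsqrtd.re_mul, Zsqrtd.im_mul]
  have hI : I ^ 2 = -1 := by
    rw [hIdef, ← map_pow, hsq, map_neg, map_one]
  -- decomposition
  have hdec : ∀ m n : ℤ, mk ⟨m, n⟩ = (m : K) + (n : K) * I := by
    intro m n
    have h : (⟨m, n⟩ : GaussianInt) = (m : GaussianInt) + (n : GaussianInt) * ⟨0, 1⟩ := by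
      ext <;> simp
    rw [h, map_add, map_mul, map_intCast, map_intCast]
  set g : ZMod p →+* K := ZMod.castHom (dvd_refl p) K with hg
  have hgc : ∀ m : ℤ, g ((m : ℤ) : ZMod p) = (m : K) := fun m => map_intCast g m
  -- bijection
  set φ : ZMod p × ZMod p → K := fun ab => g ab.1 + g ab.2 * I with hφ
  have hsurj : Function.Surjective φ := by
    intro x
    obtain ⟨z, rfl⟩ := Ideal.Quotient.mk_surjective (I := Idl) x
    refine ⟨((z.re : ZMod p), (z.im : ZMod p)), ?_⟩
    show g _ + g _ * I = _
    rw [hgc, hgc]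
    exact (hdec z.re z.im).symm
  have hinj : Function.Injective φ := stmt12_phi_inj p K I hp3 hI
  have hbij : Function.Bijective φ := ⟨hinj, hsurj⟩
  letI : Fintype K := Fintype.ofBijective φ hbij
  have hcard : Fintype.card K = p * p := by
    rw [← Fintype.card_of_bijective hbij]
    simp [ZMod.card]
  -- reduce divisibility to vanishing of the mapped polynomial
  have hdvd_iff : ∀ f : GaussianInt[X],
      (p : GaussianInt[X]) ∣ f ↔ Polynomial.map mk f = 0 := by
    intro f
    rw [← Polynomial.C_eq_natCast, Polynomial.C_dvd_iff_dvd_coeff]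
    constructor
    · intro h
      ext i
      rw [Polynomial.coeff_map, Polynomial.coeff_zero, hmk0]
      exact h i
    · intro h i
      rw [← hmk0]
      have := congrArg (fun q => Polynomial.coeff q i) h
      simpa [Polynomial.coeff_map] using this
  rw [hdvd_iff]
  rw [Polynomial.map_sub]
  rw [sub_eq_zero]
  -- filter is trivial
  have hfilt : (Finset.Icc (1 : ℤ) ((p : ℤ) - 1) ×ˢ Finset.Icc (1 : ℤ) ((p : ℤ) - 1)).filter
      (fun mn => ¬ (p : ℤ) ∣ (mn.1 ^ 2 + mn.2 ^ 2))
      = Finset.Icc (1 : ℤ) ((p : ℤ) - 1) ×ˢ Finset.Icc (1 : ℤ) ((p : ℤ) - 1) := by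
    refine Finset.filter_true_of_mem ?_
    rintro ⟨m, n⟩ hmem hdvd
    rw [Finset.mem_product, Finset.mem_Icc, Finset.mem_Icc] at hmem
    have hp2 : (2 : ℤ) ≤ (p : ℤ) := by exact_mod_cast hp.two_le
    have hm0 : ((m : ZMod p)) ≠ 0 := by
      intro h0
      have := (ZMod.intCast_zmod_eq_zero_iff_dvd m p).1 h0
      have := Int.le_of_dvd (by omega) this
      omega
    have hn0 : ((n : ZMod p)) ≠ 0 := by
      intro h0
      have := (ZMod.intCast_zmod_eq_zero_iff_dvd n p).1 h0
      have := Int.le_of_dvd (by omega) this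
      omega
    have hsum : ((m : ZMod p)) ^ 2 + ((n : ZMod p)) ^ 2 = 0 := by
      have := (ZMod.intCast_zmod_eq_zero_iff_dvd (m ^ 2 + n ^ 2) p).2 hdvd
      push_cast at this
      exact this
    have hsq2 : IsSquare (-1 : ZMod p) := by
      refine ⟨(m : ZMod p) / (n : ZMod p), ?_⟩
      rw [div_mul_div_comm, eq_div_iff (mul_ne_zero hn0 hn0)]
      linear_combination -hsum
    rw [ZMod.exists_sq_eq_neg_one_iff] at hsq2
    exact hsq2 hp3
  rw [hfilt]
  -- map the product
  rw [Polynomial.map_prod, Polynomial.map_sum]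
  have hmapsum : ∀ k : ℕ, Polynomial.map mk (X ^ (2 * k * (p - 1)) : GaussianInt[X])
      = (X : K[X]) ^ (2 * k * (p - 1)) := by
    intro k; rw [Polynomial.map_pow, Polynomial.map_X]
  rw [Finset.sum_congr rfl fun k _ => hmapsum k]
  rw [← stmt12_key p K I hp3 hI hcard]
  -- reindex
  refine Finset.prod_nbij' (fun mn => ((mn.1 : ZMod p), (mn.2 : ZMod p)))
    (fun ab => (((ab.1.val : ℤ)), ((ab.2.val : ℤ)))) ?_ ?_ ?_ ?_ ?_
  · rintro ⟨m, n⟩ hmem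
    rw [Finset.mem_product, Finset.mem_Icc, Finset.mem_Icc] at hmem
    have hp2 : (2 : ℤ) ≤ (p : ℤ) := by exact_mod_cast hp.two_le
    rw [Finset.mem_product]
    constructor <;> rw [Finset.mem_erase] <;> refine ⟨?_, Finset.mem_univ _⟩
    · intro h0
      have := Int.le_of_dvd (by omega) ((ZMod.intCast_zmod_eq_zero_iff_dvd m p).1 h0)
      omega
    · intro h0
      have := Int.le_of_dvd (by omega) ((ZMod.intCast_zmod_eq_zero_iff_dvd n p).1 h0)
      omega
  · rintro ⟨a, b⟩ hmem
    rw [Finset.mem_product, Finset.mem_erase, Finset.mem_erase] at hmem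
    rw [Finset.mem_product, Finset.mem_Icc, Finset.mem_Icc]
    have ha := ZMod.val_lt a
    have hb := ZMod.val_lt b
    have ha0 : a.val ≠ 0 := fun h => hmem.1.1 ((ZMod.val_eq_zero a).1 h)
    have hb0 : b.val ≠ 0 := fun h => hmem.2.1 ((ZMod.val_eq_zero b).1 h)
    constructor <;> constructor <;> [skip; skip; skip; skip] <;> push_cast <;> omega
  · rintro ⟨m, n⟩ hmem
    rw [Finset.mem_product, Finset.mem_Icc, Finset.mem_Icc] at hmem
    have hp2 : (2 : ℤ) ≤ (p : ℤ) := by exact_mod_cast hp.two_le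
    have h1 : ((m : ZMod p).val : ℤ) = m := by
      rw [ZMod.val_intCast]; exact Int.emod_eq_of_lt (by omega) (by omega)
    have h2 : ((n : ZMod p).val : ℤ) = n := by
      rw [ZMod.val_intCast]; exact Int.emod_eq_of_lt (by omega) (by omega)
    simp [h1, h2]
  · rintro ⟨a, b⟩ hmem
    simp only [Prod.mk.injEq]
    constructor
    · push_cast
      exact ZMod.natCast_rightInverse a
    · push_cast
      exact ZMod.natCast_rightInverse b
  · rintro ⟨m, n⟩ hmem
    rw [Polynomial.map_sub, Polynomial.map_X, Polynomial.map_C]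
    rw [hdec m n, hgc, hgc]
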